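/- If C_P^{h−2} ≤ C_I^{h−2} + (h−3) and C_I^{h−2} + f(h−2) ≤ C_P^{h−2} + (h−2), where C_I^{h−1} = C_P^{h−2} and C_P^{h−1} = (1/2)(C_P^{h−2} + C_I^{h−2} + f(h−2)), then C_P^{h−1} ≤ C_I^{h−1} + (h−2) and C_I^{h−1} + f(h−1) ≤ C_P^{h−1} + (h−1), where f(x) = log₂(2^x + 2^{x−1} − 1). -/
import Mathlib


noncomputable def fWEP (x : ℝ) : ℝ := Real.logb 2 ((2 : ℝ) ^ x + (2 : ℝ) ^ (x - 1) - 1)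

/-- Inductive step of the MinEP optimality proof.  Writing CP2, CI2 for
C_P^{h−2}, C_I^{h−2} and CP1, CI1 for C_P^{h−1}, C_I^{h−1}: if
C_P^{h−2} ≤ C_I^{h−2} + (h−3) and C_I^{h−2} + f(h−2) ≤ C_P^{h−2} + (h−2), where
C_I^{h−1} = C_P^{h−2} and C_P^{h−1} = ½(C_P^{h−2} + C_I^{h−2} + f(h−2)), then
C_P^{h−1} ≤ C_I^{h−1} + (h−2) and C_I^{h−1} + f(h−1) ≤ C_P^{h−1} + (h−1). -/
theorem minep_inductive_step (h : ℕ) (hh : 3 ≤ h) (CI1 CP1 CI2 CP2 : ℝ)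
    (h1 : CP2 ≤ CI2 + ((h : ℝ) - 3))
    (h2 : CI2 + fWEP ((h : ℝ) - 2) ≤ CP2 + ((h : ℝ) - 2))
    (h3 : CI1 = CP2)
    (h4 : CP1 = (1 / 2) * (CP2 + CI2 + fWEP ((h : ℝ) - 2))) :
    CP1 ≤ CI1 + ((h : ℝ) - 2) ∧ CI1 + fWEP ((h : ℝ) - 1) ≤ CP1 + ((h : ℝ) - 1) := by
  have hx : (3:ℝ) ≤ (h:ℝ) := by exact_mod_cast hh
  set x : ℝ := (h:ℝ) with hxdef
  set A : ℝ := (2:ℝ) ^ (x - 1) with hAdef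
  have h2two : (0:ℝ) < 2 := by norm_num
  have hA4 : (4:ℝ) ≤ A := by
    have h22 : (2:ℝ) ^ (2:ℝ) = 4 := by
      rw [show (2:ℝ) = ((2:ℕ):ℝ) by norm_num]
      rw [Real.rpow_natCast]; norm_num
    calc (4:ℝ) = (2:ℝ) ^ (2:ℝ) := h22.symm
      _ ≤ A := Real.rpow_le_rpow_of_exponent_le one_le_two (by linarith)
  have hpow : ∀ y z : ℝ, (2:ℝ) ^ (y - z) = (2:ℝ) ^ y / (2:ℝ) ^ z := fun y z =>
    Real.rpow_sub h2two y z
  have e1 : (2:ℝ) ^ (x - 2) = A / 2 := by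
    have : (2:ℝ) ^ (x - 2) = (2:ℝ) ^ ((x-1) - 1) := by ring_nf
    rw [this, hpow, Real.rpow_one]
  have e2 : (2:ℝ) ^ (x - 3) = A / 4 := by
    have h' : (2:ℝ) ^ (x - 3) = (2:ℝ) ^ ((x-2) - 1) := by ring_nf
    rw [h', hpow, Real.rpow_one, e1]; ring
  have e3 : (2:ℝ) ^ (x + 1) = 4 * A := by
    have : (2:ℝ) ^ (x + 1) = (2:ℝ) ^ ((x-1) + 2) := by ring_nf
    rw [this, Real.rpow_add h2two]
    rw [show (2:ℝ) = ((2:ℕ):ℝ) by norm_num, Real.rpow_natCast]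
    push_cast; ring
  have f2eq : fWEP (x - 2) = Real.logb 2 (3/4 * A - 1) := by
    unfold fWEP
    rw [show x - 2 - 1 = x - 3 by ring, e1, e2]
    norm_num; ring_nf
  have f1eq : fWEP (x - 1) = Real.logb 2 (3/2 * A - 1) := by
    unfold fWEP
    rw [show x - 1 - 1 = x - 2 by ring, ← hAdef, e1]
    ring_nf
  -- key inequality: 2 * f(x-1) ≤ f(x-2) + x + 1
  have hpos1 : (0:ℝ) < 3/2 * A - 1 := by linarith
  have hpos2 : (0:ℝ) < 3/4 * A - 1 := by linarith
  have hApos : (0:ℝ) < A := by linarith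
  have key : 2 * fWEP (x - 1) ≤ fWEP (x - 2) + x + 1 := by
    rw [f1eq, f2eq]
    have lhs : 2 * Real.logb 2 (3/2 * A - 1) = Real.logb 2 ((3/2 * A - 1) * (3/2 * A - 1)) := by
      rw [Real.logb_mul (ne_of_gt hpos1) (ne_of_gt hpos1)]; ring
    have rhs : Real.logb 2 (3/4 * A - 1) + x + 1
        = Real.logb 2 ((3/4 * A - 1) * (4 * A)) := by
      rw [Real.logb_mul (ne_of_gt hpos2) (by positivity), ← e3,
        Real.logb_rpow (b := 2) (by norm_num) (by norm_num)]
      ring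
    rw [lhs, rhs]
    exact (Real.logb_le_logb (by norm_num : (1:ℝ) < 2) (mul_pos hpos1 hpos1)
      (mul_pos hpos2 (by positivity))).mpr (by nlinarith [sq_nonneg (A - 4), hA4])
  constructor
  · linarith
  · rw [h3, h4]; linarith
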